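/- Let $H$ be a graph that is $4$-divisible, let $S$ be a star with an even number of edges, and let $G$ be the edge-disjoint union of $H$ and $S$. Then $G$ has an edge decomposition $(H_1, H_2, H_3, H_4, S_1, S_2, S_3, S_4)$ such that each $H_i$ is isomorphic to $H/4$, each $S_i$ is a star with $e(S_1) = e(S)/2$, and $H_i$ and $S_i$ are vertex-disjoint for every $i \in \{1,2,3,4\}$. -/

import Mathlib

open SimpleGraph Set

/-- Restriction of a graph to a vertex set (keeping the ambient vertex type). -/
def restrictG {V : Type} (H : SimpleGraph V) (A : Set V) : SimpleGraph V where
  Adj x y := H.Adj x y ∧ x ∈ A ∧ y ∈ A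
  symm := ⟨fun _ _ ⟨h, hx, hy⟩ => ⟨h.symm, hy, hx⟩⟩
  loopless := ⟨fun x ⟨h, _⟩ => H.loopless.irrefl x h⟩

lemma restrictG_adj {V : Type} (H : SimpleGraph V) (A : Set V) (x y : V) :
    (restrictG H A).Adj x y ↔ H.Adj x y ∧ x ∈ A ∧ y ∈ A := Iff.rfl

lemma restrictG_edgeSet {V : Type} (H : SimpleGraph V) (A : Set V) (e : Sym2 V) :
    e ∈ (restrictG H A).edgeSet ↔ e ∈ H.edgeSet ∧ ∀ v ∈ e, v ∈ A := by
  induction e using Sym2.ind with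
  | _ x y =>
    rw [mem_edgeSet, mem_edgeSet, restrictG_adj]
    constructor
    · rintro ⟨h, hx, hy⟩
      refine ⟨h, fun v hv => ?_⟩
      rcases Sym2.mem_iff.mp hv with rfl | rfl
      · exact hx
      · exact hy
    · rintro ⟨h, hv⟩
      exact ⟨h, hv x (Sym2.mem_mk_left x y), hv y (Sym2.mem_mk_right x y)⟩

lemma iso_induce_image {X : Type} {G : SimpleGraph X} (φ : G ≃g G) (A : Set X) :
    Nonempty (G.induce A ≃g G.induce (φ.toEquiv '' A)) := by
  refine ⟨⟨φ.toEquiv.image A, ?_⟩⟩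
  intro u v
  exact φ.map_adj_iff

lemma exists_balanced {α : Type} [Finite α] (r : α → α → Prop) (hr : Equivalence r)
    (hdiv : ∀ a, 4 ∣ Nat.card {b // r b a}) :
    ∃ (f : α → Fin 4) (ρ : α ≃ α), (∀ a, r (ρ a) a) ∧ (∀ a, f (ρ a) = f a + 1) := by
  classical
  letI s : Setoid α := ⟨r, hr⟩
  have hdivq : ∀ q : Quotient s, 4 ∣ Nat.card {a // Quotient.mk s a = q} := by
    intro q
    have : {a // Quotient.mk s a = q} ≃ {b // r b q.out} :=
      Equiv.subtypeEquivRight (fun b => Quotient.mk_eq_iff_out)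
    rw [Nat.card_congr this]
    exact hdiv _
  have he : ∀ q : Quotient s, Nonempty ({a // Quotient.mk s a = q} ≃
      (Fin (Nat.card {a // Quotient.mk s a = q} / 4) × Fin 4)) := by
    intro q
    refine Finite.card_eq.mp ?_
    rw [Nat.card_prod, Nat.card_eq_fintype_card (α := Fin _), Nat.card_eq_fintype_card (α := Fin 4),
      Fintype.card_fin, Fintype.card_fin, Nat.div_mul_cancel (hdivq q)]
  have e := fun q => (he q).some
  set f : α → Fin 4 := fun a => (e (Quotient.mk s a) ⟨a, rfl⟩).2 with hf
  set P : α → α := fun a =>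
    ((e (Quotient.mk s a)).symm ((e (Quotient.mk s a) ⟨a, rfl⟩).1,
      (e (Quotient.mk s a) ⟨a, rfl⟩).2 + 1)).1 with hP
  have keyf : ∀ (q : Quotient s) (x : {a // Quotient.mk s a = q}), f x.1 = (e q x).2 := by
    rintro q ⟨a, ha⟩
    subst ha; rfl
  have keyP : ∀ (q : Quotient s) (x : {a // Quotient.mk s a = q}),
      P x.1 = ((e q).symm ((e q x).1, (e q x).2 + 1)).1 := by
    rintro q ⟨a, ha⟩
    subst ha; rfl
  have hPq : ∀ a, Quotient.mk s (P a) = Quotient.mk s a := fun a =>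
    ((e (Quotient.mk s a)).symm _).2
  have hPinj : Function.Injective P := by
    intro a b hab
    have hq : Quotient.mk s a = Quotient.mk s b := by
      rw [← hPq a, ← hPq b, hab]
    set q := Quotient.mk s b with hqb
    have hab2 : ((e q).symm ((e q ⟨a, hq⟩).1, (e q ⟨a, hq⟩).2 + 1)) =
        ((e q).symm ((e q ⟨b, rfl⟩).1, (e q ⟨b, rfl⟩).2 + 1)) := by
      refine Subtype.ext ?_
      rw [← keyP q ⟨a, hq⟩, ← keyP q ⟨b, rfl⟩]
      exact hab
    have := (e q).symm.injective hab2
    have h3 : (e q ⟨a, hq⟩) = (e q ⟨b, rfl⟩) := by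
      obtain ⟨h4, h5⟩ := Prod.mk.injEq .. ▸ this
      exact Prod.ext h4 (by exact add_right_cancel h5)
    have := (e q).injective h3
    exact congrArg Subtype.val this
  have hPbij : Function.Bijective P := ⟨hPinj, Finite.surjective_of_injective hPinj⟩
  refine ⟨f, Equiv.ofBijective P hPbij, ?_, ?_⟩
  · intro a
    exact Quotient.exact (hPq a)
  · intro a
    have h1 := keyP (Quotient.mk s a) ⟨a, rfl⟩
    have h2 := keyf (Quotient.mk s a) ⟨P a, hPq a⟩
    rw [show (Equiv.ofBijective P hPbij) a = P a from rfl, h2]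
    have : (⟨P a, hPq a⟩ : {x // Quotient.mk s x = Quotient.mk s a}) =
        (e (Quotient.mk s a)).symm ((e (Quotient.mk s a) ⟨a, rfl⟩).1,
          (e (Quotient.mk s a) ⟨a, rfl⟩).2 + 1) := Subtype.ext h1
    rw [this, Equiv.apply_symm_apply]

lemma exists_autom {X : Type} [Finite X] (G : SimpleGraph X)
    (ρ : G.ConnectedComponent → G.ConnectedComponent) (hinj : Function.Injective ρ)
    (hρ : ∀ a, Nonempty ((G.induce a.supp) ≃g (G.induce (ρ a).supp))) :
    ∃ φ : G ≃g G, ∀ x, G.connectedComponentMk (φ x) = ρ (G.connectedComponentMk x) := by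
  classical
  have θ := fun a => (hρ a).some
  have hmem : ∀ x : X, x ∈ (G.connectedComponentMk x).supp :=
    fun x => (ConnectedComponent.mem_supp_iff _ _).mpr rfl
  set Θ : X → X := fun x => (θ (G.connectedComponentMk x) ⟨x, hmem x⟩).1 with hΘ
  have key : ∀ (a : G.ConnectedComponent) (x : X) (hx : x ∈ a.supp),
      Θ x = (θ a ⟨x, hx⟩).1 := by
    intro a x hx
    have h := (ConnectedComponent.mem_supp_iff _ _).mp hx
    subst h; rfl
  have hcc : ∀ x, G.connectedComponentMk (Θ x) = ρ (G.connectedComponentMk x) := by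
    intro x
    exact (ConnectedComponent.mem_supp_iff _ _).mp
      (θ (G.connectedComponentMk x) ⟨x, hmem x⟩).2
  have hΘinj : Function.Injective Θ := by
    intro x y hxy
    have h2 : G.connectedComponentMk x = G.connectedComponentMk y :=
      hinj (by rw [← hcc, ← hcc, hxy])
    set a := G.connectedComponentMk x with ha
    have hy : y ∈ a.supp := (ConnectedComponent.mem_supp_iff _ _).mpr h2.symm
    rw [key a x (hmem x), key a y hy] at hxy
    have := (θ a).injective (Subtype.ext hxy)
    exact congrArg Subtype.val this
  have hΘbij : Function.Bijective Θ := ⟨hΘinj, Finite.surjective_of_injective hΘinj⟩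
  have hadj : ∀ x y, G.Adj (Θ x) (Θ y) ↔ G.Adj x y := by
    intro x y
    constructor
    · intro h
      have h2 : G.connectedComponentMk x = G.connectedComponentMk y :=
        hinj (by rw [← hcc, ← hcc]; exact ConnectedComponent.sound h.reachable)
      set a := G.connectedComponentMk x with ha
      have hy : y ∈ a.supp := (ConnectedComponent.mem_supp_iff _ _).mpr h2.symm
      rw [key a x (hmem x), key a y hy] at h
      have : (G.induce (ρ a).supp).Adj (θ a ⟨x, hmem x⟩) (θ a ⟨y, hy⟩) := h
      exact ((θ a).map_adj_iff).mp this
    · intro h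
      have h2 : G.connectedComponentMk x = G.connectedComponentMk y :=
        ConnectedComponent.sound h.reachable
      set a := G.connectedComponentMk x with ha
      have hy : y ∈ a.supp := (ConnectedComponent.mem_supp_iff _ _).mpr h2.symm
      rw [key a x (hmem x), key a y hy]
      have : (G.induce a.supp).Adj ⟨x, hmem x⟩ ⟨y, hy⟩ := h
      exact ((θ a).map_adj_iff).mpr this
  exact ⟨⟨Equiv.ofBijective Θ hΘbij, fun {x y} => hadj x y⟩, hcc⟩

/-- Two edge-pieces (graphs on possibly different vertex sets) are isomorphic if the induced
graphs on their supports (vertices incident to an edge) are isomorphic. -/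
def IsoPieces {V W : Type} (A : SimpleGraph V) (B : SimpleGraph W) : Prop :=
  Nonempty ((A.induce A.support) ≃g (B.induce B.support))

/-- The number of connected components of `G` whose induced graph is isomorphic to that
of the component `c`. -/
noncomputable def isoClassCount {V : Type} (G : SimpleGraph V) (c : G.ConnectedComponent) : ℕ :=
  Nat.card {c' : G.ConnectedComponent //
    Nonempty ((G.induce c'.supp) ≃g (G.induce c.supp))}

/-- A graph is `r`-divisible if each isomorphism class of its connected components has
size divisible by `r`. -/
def GraphDivisible {V : Type} (r : ℕ) (G : SimpleGraph V) : Prop :=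
  ∀ c : G.ConnectedComponent, r ∣ isoClassCount G c

/-- Combining a 4-divisible graph with an even star: if `G` is the edge-disjoint union of a
4-divisible graph `H` and a star `S` of even size, then `G` decomposes into
`H₁, …, H₄, S₁, …, S₄` where the `Hᵢ` are pairwise isomorphic vertex-disjoint quarters of `H`
(i.e. copies of `H/4`), the `Sᵢ` are stars with `e(S₁) = e(S)/2`, and `Hᵢ` and `Sᵢ` are
vertex-disjoint for each `i`. -/
theorem combine_star_with_divisible {V : Type} [Fintype V]
    (G H S : SimpleGraph V)
    (hedisj : Disjoint H.edgeSet S.edgeSet)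
    (hunion : G.edgeSet = H.edgeSet ∪ S.edgeSet)
    (hdiv : GraphDivisible 4 (SimpleGraph.induce H.support H))
    (hstar : ∃ c : V, ∀ e ∈ S.edgeSet, c ∈ e)
    (heven : Even S.edgeSet.ncard) :
    ∃ Hs Ss : Fin 4 → SimpleGraph V,
      -- the quarters of H: vertex-disjoint, pairwise isomorphic, decomposing H
      (∀ i j, i ≠ j → Disjoint (Hs i).support (Hs j).support) ∧
      (∀ i j, IsoPieces (Hs i) (Hs j)) ∧
      (∀ i j, i ≠ j → Disjoint (Hs i).edgeSet (Hs j).edgeSet) ∧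
      (⋃ i, (Hs i).edgeSet) = H.edgeSet ∧
      -- the stars, decomposing S, with e(S₁) = e(S)/2
      (∀ i, ∃ c : V, ∀ e ∈ (Ss i).edgeSet, c ∈ e) ∧
      (∀ i j, i ≠ j → Disjoint (Ss i).edgeSet (Ss j).edgeSet) ∧
      (⋃ i, (Ss i).edgeSet) = S.edgeSet ∧
      (Ss 0).edgeSet.ncard = S.edgeSet.ncard / 2 ∧
      -- Hᵢ and Sᵢ are vertex-disjoint
      (∀ i, Disjoint (Hs i).support (Ss i).support) := by
  classical
  obtain ⟨c, hc⟩ := hstar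
  obtain ⟨m, hm⟩ := heven
  set W : Set V := H.support with hW
  set H' : SimpleGraph ↥W := SimpleGraph.induce W H with hH'
  set cc : ↥W → H'.ConnectedComponent := H'.connectedComponentMk with hcc
  -- the isomorphism equivalence relation on components
  set r : H'.ConnectedComponent → H'.ConnectedComponent → Prop :=
    fun a b => Nonempty ((H'.induce a.supp) ≃g (H'.induce b.supp)) with hr
  have hrequiv : Equivalence r := by
    constructor
    · exact fun a => ⟨RelIso.refl _⟩
    · exact fun ⟨i⟩ => ⟨i.symm⟩
    · exact fun ⟨i⟩ ⟨j⟩ => ⟨i.trans j⟩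
  obtain ⟨f, ρ, hρr, hρf⟩ := exists_balanced r hrequiv (fun a => hdiv a)
  obtain ⟨φ, hφ⟩ := exists_autom H' ρ ρ.injective
    (fun a => (hrequiv.symm (hρr a) : Nonempty _))
  -- the vertex classes of an assignment g : components → Fin 4
  set UV : (H'.ConnectedComponent → Fin 4) → Fin 4 → Set V :=
    fun g i => {v : V | ∃ h : v ∈ W, g (cc ⟨v, h⟩) = i} with hUV
  have memUV : ∀ g i (v : V), v ∈ UV g i ↔ ∃ h : v ∈ W, g (cc ⟨v, h⟩) = i := by
    intro g i v; rw [hUV]; rfl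
  have hUVdisj : ∀ g i j, i ≠ j → Disjoint (UV g i) (UV g j) := by
    intro g i j hij
    rw [Set.disjoint_left]
    intro v hvi hvj
    obtain ⟨h1, hg1⟩ := (memUV g i v).mp hvi
    obtain ⟨h2, hg2⟩ := (memUV g j v).mp hvj
    exact hij (hg1 ▸ hg2 ▸ rfl)
  -- support of restricted graphs
  have hsupp : ∀ g i, (restrictG H (UV g i)).support = UV g i := by
    intro g i
    apply Set.eq_of_subset_of_subset
    · rintro v ⟨w, hadj⟩
      exact hadj.2.1
    · intro v hv
      obtain ⟨hvW, hgv⟩ := (memUV g i v).mp hv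
      obtain ⟨w, hw⟩ := (SimpleGraph.mem_support H).mp hvW
      have hwW : w ∈ W := ⟨v, hw.symm⟩
      have hccw : cc ⟨w, hwW⟩ = cc ⟨v, hvW⟩ := by
        apply SimpleGraph.ConnectedComponent.connectedComponentMk_eq_of_adj
        exact hw.symm
      refine ⟨w, hw, hv, ?_⟩
      exact (memUV g i w).mpr ⟨hwW, by rw [hccw]; exact hgv⟩
  -- layer 1: identify the ambient induced graph with the induced graph inside W
  have layer1 : ∀ (g : H'.ConnectedComponent → Fin 4) (k : Fin 4),
      Nonempty ((H.induce (UV g k)) ≃g (H'.induce {w : ↥W | g (cc w) = k})) := by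
    intro g k
    refine ⟨⟨⟨fun x => ⟨⟨x.1, ((memUV g k x.1).mp x.2).choose⟩,
        ((memUV g k x.1).mp x.2).choose_spec⟩,
      fun y => ⟨y.1.1, (memUV g k y.1.1).mpr ⟨y.1.2, y.2⟩⟩, ?_, ?_⟩, ?_⟩⟩
    · intro x; exact Subtype.ext rfl
    · intro y; exact Subtype.ext (Subtype.ext rfl)
    · intro u v; exact Iff.rfl
  -- the image of a class under the automorphism is the next class
  have himg : ∀ k : Fin 4, φ.toEquiv '' {w : ↥W | f (cc w) = k} = {w : ↥W | f (cc w) = k + 1} := by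
    intro k
    ext v
    simp only [Set.mem_image, Set.mem_setOf_eq]
    constructor
    · rintro ⟨w, hw, rfl⟩
      have h1 : cc (φ w) = ρ (cc w) := hφ w
      have : f (cc (φ.toEquiv w)) = f (ρ (cc w)) := by
        rw [show φ.toEquiv w = φ w from rfl, h1]
      rw [this, hρf, hw]
    · intro hv
      refine ⟨φ.toEquiv.symm v, ?_, Equiv.apply_symm_apply _ _⟩
      have h1 : cc (φ (φ.toEquiv.symm v)) = ρ (cc (φ.toEquiv.symm v)) := hφ _
      have h2 : φ (φ.toEquiv.symm v) = v := Equiv.apply_symm_apply _ _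
      rw [h2] at h1
      have h3 : f (cc v) = f (cc (φ.toEquiv.symm v)) + 1 := by rw [h1, hρf]
      rw [hv] at h3
      exact (add_right_cancel h3.symm)
  have hstep : ∀ k : Fin 4, Nonempty ((H'.induce {w : ↥W | f (cc w) = k}) ≃g
      (H'.induce {w : ↥W | f (cc w) = k + 1})) := by
    intro k
    have := iso_induce_image φ {w : ↥W | f (cc w) = k}
    rwa [himg k] at this
  have hchain : ∀ k k' : Fin 4, Nonempty ((H'.induce {w : ↥W | f (cc w) = k}) ≃g
      (H'.induce {w : ↥W | f (cc w) = k'})) := by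
    have h01 := hstep 0
    have h12 := hstep 1
    have h23 := hstep 2
    rw [show (0:Fin 4) + 1 = 1 by decide] at h01
    rw [show (1:Fin 4) + 1 = 2 by decide] at h12
    rw [show (2:Fin 4) + 1 = 3 by decide] at h23
    obtain ⟨i01⟩ := h01; obtain ⟨i12⟩ := h12; obtain ⟨i23⟩ := h23
    have h0 : ∀ k : Fin 4, Nonempty ((H'.induce {w : ↥W | f (cc w) = 0}) ≃g
        (H'.induce {w : ↥W | f (cc w) = k})) := by
      intro k
      fin_cases k
      · exact ⟨RelIso.refl _⟩
      · exact ⟨i01⟩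
      · exact ⟨i01.trans i12⟩
      · exact ⟨(i01.trans i12).trans i23⟩
    intro k k'
    obtain ⟨a⟩ := h0 k
    obtain ⟨b⟩ := h0 k'
    exact ⟨a.symm.trans b⟩
  have master : ∀ k k' : Fin 4, Nonempty ((H.induce (UV f k)) ≃g (H.induce (UV f k'))) := by
    intro k k'
    obtain ⟨a⟩ := layer1 f k
    obtain ⟨b⟩ := hchain k k'
    obtain ⟨d⟩ := layer1 f k'
    exact ⟨(a.trans b).trans d.symm⟩
  -- the "other endpoint" of a star edge
  obtain ⟨oth, hoth⟩ : ∃ o : Sym2 V → V, ∀ e ∈ S.edgeSet, s(c, o e) = e :=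
    ⟨fun e => if h : e ∈ S.edgeSet then Sym2.Mem.other (hc e h) else c,
      fun e he => by simp only [dif_pos he]; exact Sym2.other_spec (hc e he)⟩
  have hmem_e : ∀ e ∈ S.edgeSet, ∀ v ∈ e, v = c ∨ v = oth e := by
    intro e he v hv
    rw [← hoth e he] at hv
    exact Sym2.mem_iff.mp hv
  -- the component of the star's centre goes to part 3
  set fD : Fin 4 := if h : c ∈ W then f (cc ⟨c, h⟩) else 0 with hfD
  set f' : H'.ConnectedComponent → Fin 4 := fun a => Equiv.swap fD 3 (f a) with hf'
  set B' : Fin 4 → Set (Sym2 V) :=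
    fun j => {e : Sym2 V | e ∈ S.edgeSet ∧ oth e ∈ UV f' j} with hB'
  have hSfin : S.edgeSet.Finite := Set.toFinite _
  have hB'sub : ∀ j, B' j ⊆ S.edgeSet := fun j e he => he.1
  obtain ⟨t, ht01, htB⟩ : ∃ t : Fin 4, (t = 0 ∨ t = 1) ∧ (B' t).ncard ≤ m := by
    by_cases h : (B' 0).ncard ≤ m
    · exact ⟨0, Or.inl rfl, h⟩
    · refine ⟨1, Or.inr rfl, ?_⟩
      have hdisj01 : Disjoint (B' 0) (B' 1) := by
        rw [Set.disjoint_left]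
        rintro e ⟨he, h0⟩ ⟨_, h1⟩
        exact (Set.disjoint_left.mp (hUVdisj f' 0 1 (by decide)) h0) h1
      have hunion01 : (B' 0 ∪ B' 1).ncard ≤ S.edgeSet.ncard :=
        Set.ncard_le_ncard (Set.union_subset (hB'sub 0) (hB'sub 1)) hSfin
      rw [Set.ncard_union_eq hdisj01 (hSfin.subset (hB'sub 0)) (hSfin.subset (hB'sub 1))] at hunion01
      omega
  set g : H'.ConnectedComponent → Fin 4 := fun a => Equiv.swap 0 t (f' a) with hg
  have h3t : (3 : Fin 4) ≠ t := by rcases ht01 with rfl | rfl <;> decide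
  have hg3 : ∀ h : c ∈ W, g (cc ⟨c, h⟩) = 3 := by
    intro h
    have h1 : fD = f (cc ⟨c, h⟩) := dif_pos h
    have h2 : f' (cc ⟨c, h⟩) = 3 := by
      rw [hf']
      simp only
      rw [← h1]
      exact Equiv.swap_apply_left fD 3
    rw [hg]
    simp only
    rw [h2]
    exact Equiv.swap_apply_of_ne_of_ne (by decide) h3t
  have hcUV : ∀ i : Fin 4, i ≠ 3 → c ∉ UV g i := by
    intro i hi hmem
    obtain ⟨h, hgc⟩ := (memUV g i c).mp hmem
    rw [hg3 h] at hgc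
    exact hi hgc.symm
  -- relate the final assignment's classes to those of f
  set π : Fin 4 ≃ Fin 4 := (Equiv.swap fD 3).trans (Equiv.swap 0 t) with hπ
  have hUVg : ∀ i, UV g i = UV f (π.symm i) := by
    intro i
    ext v
    rw [memUV, memUV]
    constructor
    · rintro ⟨h, hgv⟩
      refine ⟨h, ?_⟩
      have : π (f (cc ⟨v, h⟩)) = i := hgv
      rw [← this, Equiv.symm_apply_apply]
    · rintro ⟨h, hfv⟩
      refine ⟨h, ?_⟩
      show π (f (cc ⟨v, h⟩)) = i
      rw [hfv, Equiv.apply_symm_apply]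
  have isoUV : ∀ i j : Fin 4, Nonempty ((H.induce (UV g i)) ≃g (H.induce (UV g j))) := by
    intro i j
    rw [hUVg i, hUVg j]
    exact master _ _
  -- B-sets with respect to the final assignment
  have hUVg0 : UV g 0 = UV f' t := by
    ext v
    rw [memUV, memUV]
    constructor
    · rintro ⟨h, hgv⟩
      refine ⟨h, ?_⟩
      have : Equiv.swap 0 t (f' (cc ⟨v, h⟩)) = 0 := hgv
      have := congrArg (Equiv.swap 0 t) this
      rwa [Equiv.swap_apply_self, Equiv.swap_apply_left] at this
    · rintro ⟨h, hfv⟩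
      refine ⟨h, ?_⟩
      show Equiv.swap 0 t (f' (cc ⟨v, h⟩)) = 0
      rw [hfv]
      exact Equiv.swap_apply_right 0 t
  set B0 : Set (Sym2 V) := {e : Sym2 V | e ∈ S.edgeSet ∧ oth e ∈ UV g 0} with hB0
  set B1 : Set (Sym2 V) := {e : Sym2 V | e ∈ S.edgeSet ∧ oth e ∈ UV g 1} with hB1
  have hB0card : B0.ncard ≤ m := by
    have hBt : B0 = B' t := by simp only [hB0, hB', hUVg0]
    rw [hBt]; exact htB
  -- choose the first half-star
  obtain ⟨E₀, hE₀sub, hE₀card⟩ : ∃ E₀ ⊆ S.edgeSet \ B0, E₀.ncard = m := by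
    apply Set.exists_subset_card_eq
    have hB0S : B0 ⊆ S.edgeSet := fun e he => he.1
    rw [Set.ncard_diff hB0S (hSfin.subset hB0S)]
    omega
  set R : Set (Sym2 V) := S.edgeSet \ E₀ with hR
  set ES : Fin 4 → Set (Sym2 V) :=
    fun i => if i = 0 then E₀ else if i = 1 then R \ B1 else if i = 2 then R ∩ B1 else ∅
    with hES
  have hES0 : ES 0 = E₀ := by simp [hES]
  have hES1 : ES 1 = R \ B1 := by simp [hES]
  have hES2 : ES 2 = R ∩ B1 := by simp [hES]
  have hES3 : ES 3 = ∅ := by simp [hES]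
  have hESsub : ∀ i, ES i ⊆ S.edgeSet := by
    intro i
    fin_cases i
    · show ES 0 ⊆ _
      rw [hES0]; exact fun e he => (hE₀sub he).1
    · show ES 1 ⊆ _
      rw [hES1]; exact fun e he => he.1.1
    · show ES 2 ⊆ _
      rw [hES2]; exact fun e he => he.1.1
    · show ES 3 ⊆ _
      rw [hES3]; exact Set.empty_subset _
  have hfromE : ∀ i, (SimpleGraph.fromEdgeSet (ES i)).edgeSet = ES i := by
    intro i
    rw [SimpleGraph.edgeSet_fromEdgeSet]
    apply Set.eq_of_subset_of_subset
    · exact fun e he => he.1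
    · intro e he
      exact ⟨he, SimpleGraph.not_isDiag_of_mem_edgeSet S (hESsub i he)⟩
  have iso0 : ∀ i, ((restrictG H (UV g i)).induce (restrictG H (UV g i)).support) ≃g
      (H.induce (UV g i)) := by
    intro i
    refine ⟨Equiv.setCongr (hsupp g i), ?_⟩
    intro u v
    constructor
    · intro h
      exact ⟨h, (hsupp g i).subset u.2, (hsupp g i).subset v.2⟩
    · rintro ⟨h, _, _⟩
      exact h
  refine ⟨fun i => restrictG H (UV g i), fun i => SimpleGraph.fromEdgeSet (ES i),
    ?_, ?_, ?_, ?_, ?_, ?_, ?_, ?_, ?_⟩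
  · -- support disjointness of the H-parts
    intro i j hij
    rw [hsupp g i, hsupp g j]
    exact hUVdisj g i j hij
  · -- IsoPieces
    intro i j
    show Nonempty _
    obtain ⟨b⟩ := isoUV i j
    exact ⟨(iso0 i).trans (b.trans (iso0 j).symm)⟩
  · -- edge disjointness of the H-parts
    intro i j hij
    rw [Set.disjoint_left]
    intro e he1 he2
    induction e using Sym2.ind with
    | _ x y =>
      have h1 := (restrictG_edgeSet H (UV g i) _).mp he1
      have h2 := (restrictG_edgeSet H (UV g j) _).mp he2
      exact (Set.disjoint_left.mp (hUVdisj g i j hij)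
        (h1.2 x (Sym2.mem_mk_left x y))) (h2.2 x (Sym2.mem_mk_left x y))
  · -- union of the H-parts
    ext e
    induction e using Sym2.ind with
    | _ x y =>
      simp only [Set.mem_iUnion]
      constructor
      · rintro ⟨i, hi⟩
        exact ((restrictG_edgeSet H (UV g i) _).mp hi).1
      · intro he
        have hadj : H.Adj x y := (SimpleGraph.mem_edgeSet H).mp he
        have hx : x ∈ W := ⟨y, hadj⟩
        have hy : y ∈ W := ⟨x, hadj.symm⟩
        refine ⟨g (cc ⟨x, hx⟩), (restrictG_edgeSet H _ _).mpr ⟨he, ?_⟩⟩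
        intro v hv
        rcases Sym2.mem_iff.mp hv with rfl | rfl
        · exact (memUV g _ v).mpr ⟨hx, rfl⟩
        · refine (memUV g _ v).mpr ⟨hy, ?_⟩
          have : cc ⟨v, hy⟩ = cc ⟨x, hx⟩ :=
            SimpleGraph.ConnectedComponent.connectedComponentMk_eq_of_adj hadj.symm
          rw [this]
  · -- each star-part is a star
    intro i
    refine ⟨c, fun e he => ?_⟩
    rw [hfromE i] at he
    exact hc e (hESsub i he)
  · -- edge disjointness of the star-parts
    have hclass : ∀ (e : Sym2 V) (i : Fin 4), e ∈ ES i →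
        (i = 0 ∧ e ∈ E₀) ∨ (i = 1 ∧ e ∈ R \ B1) ∨ (i = 2 ∧ e ∈ R ∩ B1) := by
      intro e i hei
      fin_cases i
      · refine Or.inl ⟨rfl, ?_⟩
        have h : e ∈ ES 0 := hei
        rwa [hES0] at h
      · refine Or.inr (Or.inl ⟨rfl, ?_⟩)
        have h : e ∈ ES 1 := hei
        rwa [hES1] at h
      · refine Or.inr (Or.inr ⟨rfl, ?_⟩)
        have h : e ∈ ES 2 := hei
        rwa [hES2] at h
      · exfalso
        have h : e ∈ ES 3 := hei
        rw [hES3] at h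
        exact h
    intro i j hij
    rw [hfromE i, hfromE j, Set.disjoint_left]
    intro e hei hej
    rcases hclass e i hei with ⟨hi0, he0⟩ | ⟨hi1, he1⟩ | ⟨hi2, he2⟩ <;>
      rcases hclass e j hej with ⟨hj0, hf0⟩ | ⟨hj1, hf1⟩ | ⟨hj2, hf2⟩
    · exact hij (hi0.trans hj0.symm)
    · exact hf1.1.2 he0
    · exact hf2.1.2 he0
    · exact he1.1.2 hf0
    · exact hij (hi1.trans hj1.symm)
    · exact he1.2 hf2.2
    · exact he2.1.2 hf0
    · exact hf1.2 he2.2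
    · exact hij (hi2.trans hj2.symm)
  · -- union of the star-parts
    ext e
    simp only [Set.mem_iUnion]
    constructor
    · rintro ⟨i, hi⟩
      rw [hfromE i] at hi
      exact hESsub i hi
    · intro he
      by_cases h0 : e ∈ E₀
      · exact ⟨0, by rw [hfromE 0, hES0]; exact h0⟩
      · by_cases h1 : e ∈ B1
        · exact ⟨2, by rw [hfromE 2, hES2]; exact ⟨⟨he, h0⟩, h1⟩⟩
        · exact ⟨1, by rw [hfromE 1, hES1]; exact ⟨⟨he, h0⟩, h1⟩⟩
  · -- the first star has half the edges
    show (SimpleGraph.fromEdgeSet (ES 0)).edgeSet.ncard = S.edgeSet.ncard / 2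
    rw [hfromE 0, hES0, hE₀card, hm]
    omega
  · -- vertex disjointness between the H-parts and star-parts
    intro i
    rw [hsupp g i]
    rw [Set.disjoint_left]
    intro v hv hvS
    obtain ⟨w, hadj⟩ := (SimpleGraph.mem_support _).mp hvS
    rw [SimpleGraph.fromEdgeSet_adj] at hadj
    obtain ⟨hmemES, hne⟩ := hadj
    have heS : s(v, w) ∈ S.edgeSet := hESsub i hmemES
    have hvc := hmem_e _ heS v (Sym2.mem_mk_left v w)
    fin_cases i
    · -- part 0
      have hm0 : s(v, w) ∈ ES 0 := hmemES
      rw [hES0] at hm0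
      rcases hvc with h | h <;> rw [h] at hv
      · exact hcUV 0 (by decide) hv
      · exact ((hE₀sub hm0).2) ⟨heS, hv⟩
    · -- part 1
      have hm1 : s(v, w) ∈ ES 1 := hmemES
      rw [hES1] at hm1
      rcases hvc with h | h <;> rw [h] at hv
      · exact hcUV 1 (by decide) hv
      · exact hm1.2 ⟨heS, hv⟩
    · -- part 2
      have hm2 : s(v, w) ∈ ES 2 := hmemES
      rw [hES2] at hm2
      rcases hvc with h | h <;> rw [h] at hv
      · exact hcUV 2 (by decide) hv
      · exact (Set.disjoint_left.mp (hUVdisj g 1 2 (by decide)) hm2.2.2) hv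
    · -- part 3
      have hm3 : s(v, w) ∈ ES 3 := hmemES
      rw [hES3] at hm3
      exact hm3
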